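/- Let m: I → ℝ be a continuous non-decreasing surjection from an open interval I, let θ(h) > 0, and let f, h: I → I-maps with m(h(x)) = m(x) + θ(h) for all x. Define f̂ on the image of m by f̂(m(x)) = m(f(x)) (assumed well-defined), and φ(z) = f̂(z) − z. Suppose φ is strictly increasing on [0, ϑ). If w satisfies f(w) = h f h⁻¹(w) with μ = m(w) ∈ (θ(h), ϑ), then φ(μ) = φ(μ − θ(h)), contradicting strict monotonicity; hence no such w exists. -/
import Mathlib



/-- Strict monotonicity of `φ(z) = f̂(z) - z` forbids a point `w` with
`f(w) = h f h⁻¹(w)` and `m(w) ∈ (θ(h), ϑ)`. -/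
theorem stmt_14 (I : Set ℝ) (hIopen : IsOpen I) (hIconn : IsPreconnected I)
    (m : ℝ → ℝ) (hmc : ContinuousOn m I)
    (hmono : ∀ x ∈ I, ∀ y ∈ I, x ≤ y → m x ≤ m y)
    (hsurj : m '' I = Set.univ)
    (f h hinv : ℝ → ℝ)
    (hfI : Set.MapsTo f I I) (hhI : Set.MapsTo h I I) (hhinvI : Set.MapsTo hinv I I)
    (hinvl : ∀ x ∈ I, h (hinv x) = x)
    (θh ϑ : ℝ) (hθpos : 0 < θh)
    (htrans : ∀ x ∈ I, m (h x) = m x + θh)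
    (fhat : ℝ → ℝ)
    (hfhat : ∀ x ∈ I, m x ∈ Set.Ico 0 ϑ → fhat (m x) = m (f x))
    (hφ : StrictMonoOn (fun z => fhat z - z) (Set.Ico 0 ϑ)) :
    ¬ ∃ w ∈ I, f w = h (f (hinv w)) ∧ m w ∈ Set.Ioo θh ϑ := by
  rintro ⟨w, hwI, hfw, hμ⟩
  set v := hinv w with hv
  have hvI : v ∈ I := hhinvI hwI
  have hmw : m (h v) = m v + θh := htrans v hvI
  have hhvw : h v = w := hinvl w hwI
  rw [hhvw] at hmw
  have hmv : m v = m w - θh := by linarith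
  have hvmem : m v ∈ Set.Ico 0 ϑ := by
    constructor
    · rw [hmv]; linarith [hμ.1]
    · rw [hmv]; linarith [hμ.2]
  have hwmem : m w ∈ Set.Ico 0 ϑ := ⟨by linarith [hμ.1], hμ.2⟩
  have h1 : fhat (m v) = m (f v) := hfhat v hvI hvmem
  have h2 : fhat (m w) = m (f w) := hfhat w hwI hwmem
  have hfvI : f v ∈ I := hfI hvI
  have h3 : m (h (f v)) = m (f v) + θh := htrans (f v) hfvI
  have h4 : fhat (m w) = fhat (m v) + θh := by rw [h1, h2, hfw, h3]
  have hlt : m v < m w := by rw [hmv]; linarith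
  have := hφ hvmem hwmem hlt
  simp only at this
  linarith
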